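/- For every natural number m and every real θ with cos θ ≠ 0, S_{2m}(−1, 1, −3, 2; cos θ) = (−1)^m · cos((2m+1)θ) / ((2m+1) · cos θ). -/

import Mathlib

open Finset Real MeasureTheory

/-- The basic class of symmetric orthogonal polynomials `S_n(p,q,r,s;x)`. -/
noncomputable def S (p q r s : ℝ) (n : ℕ) (x : ℝ) : ℝ :=
  ∑ k ∈ Finset.range (n / 2 + 1),
    (Nat.choose (n / 2) k : ℝ) *
      (∏ i ∈ Finset.range (n / 2 - k),
        ((2 * (i : ℝ) + (-1 : ℝ) ^ (n + 1) + 2 * ((n / 2 : ℕ) : ℝ)) * p + r) /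
        ((2 * (i : ℝ) + (-1 : ℝ) ^ (n + 1) + 2) * q + s)) *
      x ^ (n - 2 * k)

/-- The monic normalization `S̄_n(p,q,r,s;x)`. -/
noncomputable def Sbar (p q r s : ℝ) (n : ℕ) (x : ℝ) : ℝ :=
  (∏ i ∈ Finset.range (n / 2),
    ((2 * (i : ℝ) + (-1 : ℝ) ^ (n + 1) + 2) * q + s) /
    ((2 * (i : ℝ) + (-1 : ℝ) ^ (n + 1) + 2 * ((n / 2 : ℕ) : ℝ)) * p + r)) *
    S p q r s n x

/-- The coefficient `(2m+1)·(−4)^j·C(m+j,2j)/(2j+1)` of `x^(2j+1)` in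
`(−1)^m·T_{2m+1}(x)`. -/
noncomputable def cf (m j : ℕ) : ℝ :=
  (2*(m:ℝ)+1) * (-4)^j * ((m+j).choose (2*j) : ℝ) / (2*(j:ℝ)+1)

/-- The polynomial `(−1)^m·T_{2m+1}(x) = (2m+1)·x·S_{2m}(−1,1,−3,2;x)`. -/
noncomputable def A (m : ℕ) (x : ℝ) : ℝ := ∑ j ∈ Finset.range (m+1), cf m j * x^(2*j+1)

lemma cf_eq_zero (m j : ℕ) (h : m < j) : cf m j = 0 := by
  have : m + j < 2*j := by omega
  simp [cf, Nat.choose_eq_zero_of_lt this]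

lemma cf_zero (m : ℕ) : cf m 0 = 2*(m:ℝ)+1 := by simp [cf]

lemma pascal (n k : ℕ) : (n+1).choose (k+1) = n.choose k + n.choose (k+1) :=
  Nat.choose_succ_succ n k

lemma cf_rec (m j : ℕ) (h : j ≤ m+1) :
    cf (m+2) (j+1) = 2 * cf (m+1) (j+1) - 4 * cf (m+1) j - cf m (j+1) := by
  set a := (m+j+1).choose (2*j) with ha
  set b := (m+j+1).choose (2*j+1) with hb
  set c := (m+j+1).choose (2*j+1+1) with hc
  have e2 : 2*(j+1) = 2*j+1+1 := by omega
  have h1 : (m+2+(j+1)).choose (2*(j+1)) = a + 2*b + c := by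
    have e1 : m+2+(j+1) = m+j+1+1+1 := by omega
    rw [e1, e2, pascal (m+j+1+1) (2*j+1), pascal (m+j+1) (2*j), pascal (m+j+1) (2*j+1)]
    omega
  have h2 : (m+1+(j+1)).choose (2*(j+1)) = b + c := by
    have e1 : m+1+(j+1) = m+j+1+1 := by omega
    rw [e1, e2, pascal (m+j+1) (2*j+1)]
  have h3 : (m+1+j).choose (2*j) = a := by rw [show m+1+j = m+j+1 from by omega]
  have h4 : (m+(j+1)).choose (2*(j+1)) = c := by rw [show m+(j+1) = m+j+1 from by omega, e2]
  have hrel : (b:ℝ) * (2*(j:ℝ)+1) = (a:ℝ) * ((m:ℝ)+1-j) := by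
    have h0 := Nat.choose_succ_right_eq (m+j+1) (2*j)
    have e : m+j+1 - 2*j = m+1-j := by omega
    rw [e, ← ha, ← hb] at h0
    have h5 := congrArg (Nat.cast (R := ℝ)) h0
    push_cast [Nat.cast_sub (by omega : j ≤ m+1)] at h5
    linarith [h5]
  unfold cf
  rw [h1, h2, h3, h4]
  have d2 : (2*(j:ℝ)+1) ≠ 0 := by positivity
  have hbr : (b:ℝ) = (a:ℝ) * ((m:ℝ)+1-j) / (2*(j:ℝ)+1) := by
    field_simp
    linarith [hrel]
  push_cast
  rw [hbr]
  have d1 : (2*((j:ℝ)+1)+1) ≠ 0 := by positivity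
  field_simp
  ring

lemma A_rec (m : ℕ) (x : ℝ) : A (m+2) x = (2 - 4*x^2) * A (m+1) x - A m x := by
  have L : A (m+2) x = (∑ j ∈ Finset.range (m+2),
      (2 * cf (m+1) (j+1) - 4 * cf (m+1) j - cf m (j+1)) * x^(2*(j+1)+1))
      + cf (m+2) 0 * x^(2*0+1) := by
    show (∑ j ∈ Finset.range (m+2+1), cf (m+2) j * x^(2*j+1)) = _
    rw [Finset.sum_range_succ']
    congr 1
    refine Finset.sum_congr rfl fun j hj => ?_
    rw [cf_rec m j (by have := Finset.mem_range.mp hj; omega)]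
  have R1 : A (m+1) x = (∑ j ∈ Finset.range (m+2), cf (m+1) (j+1) * x^(2*(j+1)+1))
      + cf (m+1) 0 * x^(2*0+1) := by
    have e1 : A (m+1) x = ∑ j ∈ Finset.range (m+2+1), cf (m+1) j * x^(2*j+1) := by
      rw [Finset.sum_range_succ, cf_eq_zero (m+1) (m+2) (by omega)]
      simp [A]
    rw [e1, Finset.sum_range_succ']
  have R2 : x^2 * A (m+1) x = ∑ j ∈ Finset.range (m+2), cf (m+1) j * x^(2*(j+1)+1) := by
    rw [A, Finset.mul_sum]
    refine Finset.sum_congr rfl fun j hj => by ring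
  have R0 : A m x = (∑ j ∈ Finset.range (m+2), cf m (j+1) * x^(2*(j+1)+1))
      + cf m 0 * x^(2*0+1) := by
    have e0 : A m x = ∑ j ∈ Finset.range (m+2+1), cf m j * x^(2*j+1) := by
      rw [Finset.sum_range_succ, cf_eq_zero m (m+2) (by omega),
        Finset.sum_range_succ, cf_eq_zero m (m+1) (by omega)]
      simp [A]
    rw [e0, Finset.sum_range_succ']
  rw [L, show (2-4*x^2) * A (m+1) x - A m x
      = 2 * A (m+1) x - 4 * (x^2 * A (m+1) x) - A m x from by ring, R2, R1, R0]
  simp only [sub_mul]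
  rw [Finset.sum_sub_distrib, Finset.sum_sub_distrib]
  simp only [mul_assoc]
  rw [← Finset.mul_sum, ← Finset.mul_sum]
  rw [cf_zero, cf_zero, cf_zero]
  push_cast
  ring

lemma A_cos (θ : ℝ) : ∀ m : ℕ, A m (Real.cos θ) = (-1)^m * Real.cos ((2*(m:ℝ)+1)*θ) := by
  have base0 : A 0 (Real.cos θ) = Real.cos θ := by
    simp [A, cf]
  have base1 : A 1 (Real.cos θ) = 3 * Real.cos θ - 4 * (Real.cos θ)^3 := by
    rw [A, Finset.sum_range_succ, Finset.sum_range_succ, Finset.sum_range_zero]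
    norm_num [cf]
    ring
  have key : ∀ m : ℕ, A m (Real.cos θ) = (-1)^m * Real.cos ((2*(m:ℝ)+1)*θ) ∧
      A (m+1) (Real.cos θ) = (-1)^(m+1) * Real.cos ((2*(((m+1):ℕ):ℝ)+1)*θ) := by
    intro m
    induction m with
    | zero =>
      constructor
      · rw [base0]; norm_num
      · rw [base1]
        have h3 : (2*(((0+1:ℕ)):ℝ)+1)*θ = 3*θ := by push_cast; ring
        rw [h3, Real.cos_three_mul]
        ring
    | succ n ih =>
      refine ⟨ih.2, ?_⟩
      rw [show n+1+1 = n+2 from rfl, A_rec, ih.1, ih.2]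
      have h1 : (2*(((n+2:ℕ)):ℝ)+1)*θ = (2*(((n+1:ℕ)):ℝ)+1)*θ + 2*θ := by push_cast; ring
      have h2 : (2*(n:ℝ)+1)*θ = (2*(((n+1:ℕ)):ℝ)+1)*θ - 2*θ := by push_cast; ring
      rw [h1, h2, Real.cos_add, Real.cos_sub, Real.cos_two_mul]
      ring
  intro m
  exact (key m).1

lemma prod_eval (m : ℕ) : ∀ j : ℕ,
    (∏ i ∈ Finset.range j, (-(2*(i:ℝ)+2*(m:ℝ)+2))/(2*(i:ℝ)+3))
      = (-4)^j * ((m+j).factorial : ℝ) * (j.factorial : ℝ)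
        / ((m.factorial : ℝ) * ((2*j+1).factorial : ℝ)) := by
  intro j
  induction j with
  | zero => simp [ne_of_gt (Nat.cast_pos.mpr (Nat.factorial_pos m) : (0:ℝ) < m.factorial)]
  | succ n ih =>
    rw [Finset.prod_range_succ, ih]
    have e1 : (m + (n+1)).factorial = (m+n+1) * (m+n).factorial := by
      rw [show m+(n+1) = (m+n)+1 from by omega, Nat.factorial_succ]
    have e2 : (n+1).factorial = (n+1) * n.factorial := Nat.factorial_succ n
    have e3 : (2*(n+1)+1).factorial = (2*n+3) * ((2*n+2) * (2*n+1).factorial) := by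
      rw [show 2*(n+1)+1 = ((2*n+1)+1)+1 from by omega, Nat.factorial_succ, Nat.factorial_succ]
    rw [e1, e2, e3]
    have hm : (m.factorial : ℝ) ≠ 0 := by positivity
    have hf : (((2*n+1).factorial : ℕ) : ℝ) ≠ 0 := by positivity
    have d1 : (2*(n:ℝ)+3) ≠ 0 := by positivity
    push_cast
    field_simp
    ring

lemma choose_fact (m j : ℕ) (h : j ≤ m) :
    (m.choose j) * (m+j).factorial * j.factorial
      = ((m+j).choose (2*j)) * m.factorial * (2*j).factorial := by
  have h1 : m.choose j * j.factorial * (m-j).factorial = m.factorial :=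
    Nat.choose_mul_factorial_mul_factorial h
  have h2 : (m+j).choose (2*j) * (2*j).factorial * (m-j).factorial = (m+j).factorial := by
    have := Nat.choose_mul_factorial_mul_factorial (show 2*j ≤ m+j by omega)
    rwa [show m+j-2*j = m-j from by omega] at this
  apply Nat.eq_of_mul_eq_mul_right (Nat.factorial_pos (m-j))
  calc m.choose j * (m+j).factorial * j.factorial * (m-j).factorial
      = (m.choose j * j.factorial * (m-j).factorial) * (m+j).factorial := by ring
    _ = m.factorial * (m+j).factorial := by rw [h1]
    _ = ((m+j).choose (2*j) * (2*j).factorial * (m-j).factorial) * m.factorial := by rw [h2]; ring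
    _ = (m+j).choose (2*j) * m.factorial * (2*j).factorial * (m-j).factorial := by ring

lemma term_eval (m j : ℕ) (h : j ≤ m) (x : ℝ) :
    (2*(m:ℝ)+1) * x * ((m.choose j : ℝ) *
      (∏ i ∈ Finset.range j, (-(2*(i:ℝ)+2*(m:ℝ)+2))/(2*(i:ℝ)+3)) * x^(2*j))
      = cf m j * x^(2*j+1) := by
  rw [prod_eval, cf]
  have hc := choose_fact m j h
  have hcR : ((m.choose j : ℕ) : ℝ) * ((m+j).factorial : ℝ) * (j.factorial : ℝ)
      = (((m+j).choose (2*j) : ℕ) : ℝ) * (m.factorial : ℝ) * ((2*j).factorial : ℝ) := by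
    exact_mod_cast congrArg (Nat.cast (R := ℝ)) hc
  have e3 : ((2*j+1).factorial : ℝ) = (2*(j:ℝ)+1) * ((2*j).factorial : ℝ) := by
    rw [Nat.factorial_succ]; push_cast; ring
  rw [e3]
  have hm : (m.factorial : ℝ) ≠ 0 := by positivity
  have hf : (((2*j).factorial : ℕ) : ℝ) ≠ 0 := by positivity
  have d1 : (2*(j:ℝ)+1) ≠ 0 := by positivity
  rw [pow_succ]
  field_simp
  linear_combination (x^(2*j) * x) * hcR

lemma S_eq_A (m : ℕ) (x : ℝ) :
    (2*(m:ℝ)+1) * x * S (-1) 1 (-3) 2 (2*m) x = A m x := by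
  have h2 : 2*m/2 = m := by omega
  have hneg : (-1 : ℝ)^(2*m+1) = -1 := by
    rw [pow_succ, pow_mul]
    norm_num
  rw [S, h2, hneg]
  rw [A]
  rw [← Finset.sum_range_reflect (fun j => cf m j * x^(2*j+1)) (m+1)]
  rw [Finset.mul_sum]
  refine Finset.sum_congr rfl fun k hk => ?_
  have hk' : k ≤ m := by have := Finset.mem_range.mp hk; omega
  have e1 : m + 1 - 1 - k = m - k := by omega
  rw [e1]
  have e2 : 2*m - 2*k = 2*(m-k) := by omega
  rw [e2]
  have e3 : m.choose k = m.choose (m-k) := (Nat.choose_symm hk').symm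
  have hprod : (∏ i ∈ Finset.range (m-k),
        ((2 * (i : ℝ) + -1 + 2 * ((m : ℕ) : ℝ)) * (-1) + (-3)) /
        ((2 * (i : ℝ) + -1 + 2) * 1 + 2))
      = ∏ i ∈ Finset.range (m-k), (-(2*(i:ℝ)+2*(m:ℝ)+2))/(2*(i:ℝ)+3) := by
    refine Finset.prod_congr rfl fun i _ => ?_
    norm_num
    ring_nf
  rw [hprod, e3]
  exact term_eval m (m-k) (by omega) x

/-- Half-trigonometric form of the even-degree Chebyshev polynomials of the fifth kind:
`S_{2m}(−1,1,−3,2;cos θ) = (−1)^m cos((2m+1)θ)/((2m+1)cos θ)`. -/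
theorem fifth_kind_chebyshev_trig_form (m : ℕ) (θ : ℝ) (hθ : Real.cos θ ≠ 0) :
    S (-1) 1 (-3) 2 (2 * m) (Real.cos θ) =
      (-1 : ℝ) ^ m * Real.cos ((2 * (m : ℝ) + 1) * θ) / ((2 * (m : ℝ) + 1) * Real.cos θ) := by
  have h := S_eq_A m (Real.cos θ)
  have h2 := A_cos θ m
  have hne : (2*(m:ℝ)+1) * Real.cos θ ≠ 0 := mul_ne_zero (by positivity) hθ
  rw [eq_div_iff hne]
  linear_combination h + h2
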